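/- Let k ≥ 2 and let M be a k×k real matrix with nonnegative entries. Then the sum of the absolute values of the complex eigenvalues of M, counted with multiplicity, is at most the sum of all entries of M. (This spectral bound is the key step in the paper's eigenvalue lemma for joint PMF matrices.) -/

import Mathlib

open Polynomial Matrix Finset

private lemma myEval_charpoly {m : ℕ} (M : Matrix (Fin m) (Fin m) ℂ) (μ : ℂ) :
    M.charpoly.eval μ = (μ • (1 : Matrix (Fin m) (Fin m) ℂ) - M).det := by
  rw [Matrix.charpoly, ← Polynomial.coe_evalRingHom, RingHom.map_det]
  congr 1
  ext i j
  by_cases h : i = j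
  · subst h; simp [Matrix.charmatrix_apply, Matrix.one_apply]
  · simp [Matrix.charmatrix_apply, Matrix.one_apply, h, Matrix.diagonal_apply_ne _ h]

private lemma myExists_eigenvector {m : ℕ} (M : Matrix (Fin m) (Fin m) ℂ) (μ : ℂ)
    (h : M.charpoly.IsRoot μ) : ∃ v : Fin m → ℂ, v ≠ 0 ∧ M *ᵥ v = μ • v := by
  have hdet : (μ • (1 : Matrix (Fin m) (Fin m) ℂ) - M).det = 0 := by
    rw [← myEval_charpoly]; exact h
  obtain ⟨v, hv0, hv⟩ := (Matrix.exists_mulVec_eq_zero_iff).2 hdet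
  refine ⟨v, hv0, ?_⟩
  have := sub_eq_zero.mpr hv.symm  -- not right; do directly
  rw [Matrix.sub_mulVec, Matrix.smul_mulVec, Matrix.one_mulVec, sub_eq_zero] at hv
  exact hv.symm

private lemma myExists_unitary_col {m : ℕ} (w : Fin (m+1) → ℂ)
    (hw : ∑ i, ‖w i‖ ^ 2 = 1) :
    ∃ U : Matrix (Fin (m+1)) (Fin (m+1)) ℂ, Uᴴ * U = 1 ∧ (∀ i, U i 0 = w i) := by
  classical
  -- view w as element of EuclideanSpace
  let w' : EuclideanSpace ℂ (Fin (m+1)) := WithLp.toLp 2 w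
  have hw' : ‖w'‖ = 1 := by
    rw [EuclideanSpace.norm_eq]
    have h2 : ∑ i, ‖w' i‖ ^ 2 = 1 := by simpa using hw
    rw [h2, Real.sqrt_one]
  have hcard : Module.finrank ℂ (EuclideanSpace ℂ (Fin (m+1))) = Fintype.card (Fin (m+1)) := by
    simp [finrank_euclideanSpace_fin]
  have horth : Orthonormal ℂ (({0} : Set (Fin (m+1))).restrict (fun _ => w')) := by
    rw [orthonormal_iff_ite]
    rintro ⟨i, hi⟩ ⟨j, hj⟩
    simp only [Set.mem_singleton_iff] at hi hj
    subst hi; subst hj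
    simp only [Set.restrict_apply, if_pos rfl, if_true]
    show inner ℂ w' w' = 1
    rw [inner_self_eq_norm_sq_to_K, hw']; simp
  obtain ⟨b, hb⟩ := horth.exists_orthonormalBasis_extension_of_card_eq hcard
  have hb0 : b 0 = w' := hb 0 rfl
  refine ⟨Matrix.of (fun i j => b j i), ?_, fun i => by simp [hb0, w']⟩
  ext j k
  have := (orthonormal_iff_ite.1 b.orthonormal) j k
  rw [PiLp.inner_apply] at this
  simp only [Matrix.mul_apply, Matrix.conjTranspose_apply, Matrix.of_apply, Matrix.one_apply]
  simpa [RCLike.inner_apply, mul_comm] using this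

private lemma myCharpoly_succ {m : ℕ} (N : Matrix (Fin (m+1)) (Fin (m+1)) ℂ)
    (h : ∀ i : Fin (m+1), i ≠ 0 → N i 0 = 0) :
    N.charpoly = (X - C (N 0 0)) * (N.submatrix Fin.succ Fin.succ).charpoly := by
  have hsub : (charmatrix N).submatrix Fin.succ Fin.succ
      = charmatrix (N.submatrix Fin.succ Fin.succ) := by
    ext i j
    by_cases hij : i = j
    · subst hij; simp [charmatrix_apply_eq]
    · rw [Matrix.submatrix_apply, charmatrix_apply_ne _ _ _ (fun hc => hij (Fin.succ_injective _ hc)),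
        charmatrix_apply_ne _ _ _ hij, Matrix.submatrix_apply]
  rw [Matrix.charpoly, Matrix.det_succ_column_zero, Fin.sum_univ_succ]
  have hz : ∀ i : Fin m, (-1 : ℂ[X]) ^ ((i.succ : Fin (m+1)) : ℕ) * charmatrix N i.succ 0 *
      ((charmatrix N).submatrix (Fin.succ i).succAbove Fin.succ).det = 0 := by
    intro i
    rw [charmatrix_apply_ne _ _ _ (Fin.succ_ne_zero i), h i.succ (Fin.succ_ne_zero i)]
    simp
  rw [Finset.sum_congr rfl (fun i _ => hz i), Finset.sum_const, smul_zero, add_zero]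
  rw [charmatrix_apply_eq, Fin.succAbove_zero, hsub]
  simp [Matrix.charpoly]

private lemma myCharpoly_conj {m : ℕ} (U M : Matrix (Fin m) (Fin m) ℂ) (hU : Uᴴ * U = 1) :
    (Uᴴ * M * U).charpoly = M.charpoly := by
  classical
  let f : ℂ →+* ℂ[X] := Polynomial.C
  let P := Uᴴ.map f
  let Q := U.map f
  have hPQ : P * Q = 1 := by
    have := congrArg (fun A : Matrix (Fin m) (Fin m) ℂ => A.map f) hU
    simpa [P, Q, Matrix.map_mul, Matrix.map_one] using this
  have hchar : charmatrix (Uᴴ * M * U) = P * charmatrix M * Q := by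
    rw [charmatrix]
    rw [charmatrix]
    rw [Matrix.mul_sub, Matrix.sub_mul]
    congr 1
    · rw [← (Matrix.scalar_commute _ (fun r => Commute.all _ r) P).eq, mul_assoc, hPQ, mul_one]
    · simp [P, Q, Matrix.map_mul, f]
  rw [Matrix.charpoly, Matrix.charpoly, hchar, Matrix.det_mul, Matrix.det_mul]
  have : P.det * Q.det = 1 := by rw [← Matrix.det_mul, hPQ, Matrix.det_one]
  calc P.det * (charmatrix M).det * Q.det
      = P.det * Q.det * (charmatrix M).det := by ring
    _ = (charmatrix M).det := by rw [this, one_mul]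

private lemma myExists_unitary_diag :
    ∀ (m : ℕ) (M : Matrix (Fin m) (Fin m) ℂ),
    ∃ U : Matrix (Fin m) (Fin m) ℂ, Uᴴ * U = 1 ∧
      (Finset.univ.val.map fun i => (Uᴴ * M * U) i i) = M.charpoly.roots := by
  intro m
  induction m with
  | zero =>
    intro M
    refine ⟨1, by simp, ?_⟩
    have h1 : M.charpoly = 1 := by
      rw [Matrix.charpoly, Matrix.det_isEmpty]
    rw [h1, Polynomial.roots_one]
    simp
  | succ m ih =>
    intro M
    have hdeg : 0 < M.charpoly.degree := by
      rw [Matrix.charpoly_degree_eq_dim]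
      simp only [Fintype.card_fin]
      exact_mod_cast Nat.succ_pos m
    obtain ⟨μ, hμ⟩ := Complex.exists_root hdeg
    obtain ⟨v, hv0, hv⟩ := myExists_eigenvector M μ hμ
    -- normalize
    set nv : ℝ := Real.sqrt (∑ i, ‖v i‖ ^ 2) with hnv
    have hnvpos : 0 < nv := by
      apply Real.sqrt_pos.2
      rcases Function.ne_iff.1 hv0 with ⟨i, hi⟩
      have h1 : (0:ℝ) < ‖v i‖ ^ 2 := pow_pos (norm_pos_iff.2 hi) 2
      have h2 : ∀ j ∈ Finset.univ, (0:ℝ) ≤ ‖v j‖ ^ 2 := fun j _ => by positivity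
      exact Finset.sum_pos' h2 ⟨i, Finset.mem_univ i, h1⟩
    set w : Fin (m+1) → ℂ := ((nv⁻¹ : ℝ) : ℂ) • v with hwdef
    have hw : ∑ i, ‖w i‖ ^ 2 = 1 := by
      have : ∀ i, ‖w i‖ ^ 2 = nv⁻¹ ^ 2 * ‖v i‖ ^ 2 := by
        intro i
        rw [hwdef, Pi.smul_apply, smul_eq_mul, norm_mul, Complex.norm_real, Real.norm_eq_abs,
          abs_of_nonneg (inv_nonneg.2 hnvpos.le), mul_pow]
      rw [Finset.sum_congr rfl (fun i _ => this i), ← Finset.mul_sum]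
      have hsq : nv ^ 2 = ∑ i, ‖v i‖ ^ 2 := by
        rw [hnv, Real.sq_sqrt]
        exact Finset.sum_nonneg fun j _ => by positivity
      rw [← hsq]
      field_simp
    have hvw : M *ᵥ w = μ • w := by
      rw [hwdef, Matrix.mulVec_smul, hv, smul_comm]
    obtain ⟨U1, hU1, hU1col⟩ := myExists_unitary_col w hw
    set N : Matrix (Fin (m+1)) (Fin (m+1)) ℂ := U1ᴴ * M * U1 with hNdef
    have hNcol : ∀ i, N i 0 = μ * (Pi.single (0 : Fin (m+1)) (1:ℂ) : Fin (m+1) → ℂ) i := by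
      have hU1e : U1 *ᵥ (Pi.single (0 : Fin (m+1)) (1:ℂ)) = w := by
        ext i
        rw [Matrix.mulVec_single]
        simp [hU1col i]
      have hNv : N *ᵥ (Pi.single (0 : Fin (m+1)) (1:ℂ)) = μ • (Pi.single (0 : Fin (m+1)) (1:ℂ) : Fin (m+1) → ℂ) := by
        rw [hNdef, ← Matrix.mulVec_mulVec, ← Matrix.mulVec_mulVec, hU1e, hvw,
          Matrix.mulVec_smul, ← hU1e, Matrix.mulVec_mulVec, hU1, Matrix.one_mulVec]
      intro i
      have := congrFun hNv i
      rw [Matrix.mulVec_single] at this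
      simpa using this
    have hN00 : N 0 0 = μ := by rw [hNcol 0]; simp
    have hNs0 : ∀ i : Fin (m+1), i ≠ 0 → N i 0 = 0 := by
      intro i hi
      rw [hNcol i, Pi.single_eq_of_ne hi, mul_zero]
    set B : Matrix (Fin m) (Fin m) ℂ := N.submatrix Fin.succ Fin.succ with hBdef
    obtain ⟨V, hV, hVdiag⟩ := ih B
    set W : Matrix (Fin (m+1)) (Fin (m+1)) ℂ :=
      Matrix.of (Fin.cons (Fin.cons (1:ℂ) (0 : Fin m → ℂ)) (fun i' => Fin.cons (0:ℂ) (V i'))) with hWdef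
    have hW00 : W 0 0 = 1 := by simp [hWdef]
    have hW0s : ∀ j : Fin m, W 0 j.succ = 0 := fun j => by simp [hWdef]
    have hWs0 : ∀ i : Fin m, W i.succ 0 = 0 := fun i => by simp [hWdef]
    have hWss : ∀ i j : Fin m, W i.succ j.succ = V i j := fun i j => by simp [hWdef]
    have hWunit : Wᴴ * W = 1 := by
      ext j k
      rw [Matrix.mul_apply, Fin.sum_univ_succ]
      simp only [Matrix.conjTranspose_apply]
      induction j using Fin.cases with
      | zero =>
        induction k using Fin.cases with
        | zero => simp [hW00, hWs0]
        | succ k' => simp [hW00, hW0s, hWs0, Matrix.one_apply, (Fin.succ_ne_zero k').symm]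
      | succ j' =>
        induction k using Fin.cases with
        | zero => simp [hW00, hW0s, hWs0, Matrix.one_apply, Fin.succ_ne_zero j']
        | succ k' =>
          have hVjk := congrFun (congrFun hV j') k'
          rw [Matrix.mul_apply] at hVjk
          simp only [Matrix.conjTranspose_apply] at hVjk
          simp only [hW0s, hWss, star_zero, zero_mul, zero_add]
          rw [hVjk]
          by_cases hjk : j' = k'
          · subst hjk; simp [Matrix.one_apply]
          · rw [Matrix.one_apply_ne hjk, Matrix.one_apply_ne (fun hc => hjk (Fin.succ_injective _ hc))]
    set T : Matrix (Fin (m+1)) (Fin (m+1)) ℂ := Wᴴ * N * W with hTdef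
    have hNW : ∀ (a : Fin (m+1)) (k : Fin m), (N * W) a k.succ = ∑ b : Fin m, N a b.succ * V b k := by
      intro a k
      rw [Matrix.mul_apply, Fin.sum_univ_succ, hW0s k, mul_zero, zero_add]
      exact Finset.sum_congr rfl fun b _ => by rw [hWss]
    have hT00 : T 0 0 = μ := by
      rw [hTdef, Matrix.mul_assoc, Matrix.mul_apply, Fin.sum_univ_succ]
      simp only [Matrix.conjTranspose_apply]
      rw [hW00]
      have h1 : (N * W) 0 0 = μ := by
        rw [Matrix.mul_apply, Fin.sum_univ_succ, hW00, mul_one, hN00]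
        rw [Finset.sum_congr rfl fun b _ => by rw [hWs0 b, mul_zero]]
        simp
      rw [h1]
      rw [Finset.sum_congr rfl fun a _ => by rw [hWs0 a, star_zero, zero_mul]]
      simp
    have hTss : ∀ i : Fin m, T i.succ i.succ = (Vᴴ * B * V) i i := by
      intro i
      rw [hTdef, Matrix.mul_assoc, Matrix.mul_apply, Fin.sum_univ_succ]
      simp only [Matrix.conjTranspose_apply]
      rw [hW0s i, star_zero, zero_mul, zero_add]
      conv_rhs => rw [Matrix.mul_assoc, Matrix.mul_apply]
      refine Finset.sum_congr rfl fun a _ => ?_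
      rw [hWss, hNW a.succ i]
      conv_rhs => rw [Matrix.conjTranspose_apply, Matrix.mul_apply, Finset.mul_sum]
      rw [Finset.mul_sum]
      refine Finset.sum_congr rfl fun b _ => ?_
      rw [hBdef, Matrix.submatrix_apply]
    refine ⟨U1 * W, ?_, ?_⟩
    · rw [Matrix.conjTranspose_mul, Matrix.mul_assoc, ← Matrix.mul_assoc U1ᴴ U1 W, hU1, Matrix.one_mul, hWunit]
    · have hconj : (U1 * W)ᴴ * M * (U1 * W) = T := by
        rw [hTdef, hNdef, Matrix.conjTranspose_mul]
        noncomm_ring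
      rw [hconj]
      have hroots : M.charpoly.roots = μ ::ₘ B.charpoly.roots := by
        rw [← myCharpoly_conj U1 M hU1, ← hNdef, myCharpoly_succ N hNs0, hN00, ← hBdef]
        rw [Polynomial.roots_mul (mul_ne_zero (Polynomial.monic_X_sub_C μ).ne_zero
          (Matrix.charpoly_monic B).ne_zero), Polynomial.roots_X_sub_C]
        rw [Multiset.singleton_add]
      rw [hroots, ← hVdiag]
      rw [Fin.univ_succ]
      simp only [Finset.cons_val, Finset.map_val, Multiset.map_cons, Multiset.map_map]
      rw [hT00]
      congr 1
      refine Multiset.map_congr rfl fun i _ => ?_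
      simp only [Function.comp_apply, Function.Embedding.coeFn_mk]
      exact hTss i

/-- Let `k ≥ 2` and let `M` be a `k × k` real matrix with nonnegative entries.  Then the
sum of the absolute values of the complex eigenvalues of `M` (the roots of its
characteristic polynomial over `ℂ`, counted with multiplicity) is at most the sum of
all entries of `M`. -/
theorem sum_abs_eigenvalues_le_sum_entries (k : ℕ) (hk : 2 ≤ k)
    (M : Matrix (Fin k) (Fin k) ℝ) (hnn : ∀ i j, 0 ≤ M i j) :
    (((M.map (Complex.ofReal)).charpoly.roots).map (fun z : ℂ => ‖z‖)).sum
      ≤ ∑ i, ∑ j, M i j := by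
  classical
  set Mc : Matrix (Fin k) (Fin k) ℂ := M.map Complex.ofReal with hMc
  obtain ⟨U, hU, hdiag⟩ := myExists_unitary_diag k Mc
  set d : Fin k → ℂ := fun i => (Uᴴ * Mc * U) i i with hd
  have hL : ((Mc.charpoly.roots).map (fun z : ℂ => ‖z‖)).sum = ∑ i, ‖d i‖ := by
    rw [← hdiag, Multiset.map_map]
    rfl
  rw [hL]
  have hUU : U * Uᴴ = 1 := mul_eq_one_comm.1 hU
  have hrow : ∀ i, ∑ l, ‖U i l‖ ^ 2 = 1 := by
    intro i
    have h1 : (U * Uᴴ) i i = 1 := by rw [hUU, Matrix.one_apply_eq]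
    rw [Matrix.mul_apply] at h1
    have h2 : ∀ l, U i l * Uᴴ l i = ((‖U i l‖ ^ 2 : ℝ) : ℂ) := by
      intro l
      rw [Matrix.conjTranspose_apply, show (star (U i l)) = (starRingEnd ℂ) (U i l) from rfl,
        Complex.mul_conj, Complex.sq_norm]
    rw [Finset.sum_congr rfl fun l _ => h2 l, ← Complex.ofReal_sum] at h1
    exact_mod_cast h1
  set u : Fin k → ℂ := fun i => if d i = 0 then 1 else (starRingEnd ℂ) (d i) / (‖d i‖ : ℂ) with hu
  have hud : ∀ i, u i * d i = ((‖d i‖ : ℝ) : ℂ) := by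
    intro i
    by_cases h : d i = 0
    · simp [hu, h]
    · rw [hu]
      simp only [if_neg h]
      have habs : (‖d i‖ : ℂ) ≠ 0 := by
        simpa using (norm_ne_zero_iff.2 h)
      field_simp
      rw [mul_comm, Complex.mul_conj, Complex.normSq_eq_norm_sq]
      push_cast
      ring
  have hu1 : ∀ i, ‖u i‖ ≤ 1 := by
    intro i
    by_cases h : d i = 0
    · simp [hu, h]
    · rw [hu]
      simp only [if_neg h]
      rw [norm_div, Complex.norm_conj, Complex.norm_real, Real.norm_eq_abs, abs_of_nonneg (norm_nonneg _),
        div_self (norm_ne_zero_iff.2 h)]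
  set A : Matrix (Fin k) (Fin k) ℂ := U * Matrix.diagonal u * Uᴴ with hA
  have htr : Matrix.trace (A * Mc) = ∑ i, ((‖d i‖ : ℝ) : ℂ) := by
    have h1 : A * Mc = U * (Matrix.diagonal u * (Uᴴ * Mc)) := by
      rw [hA]; noncomm_ring
    rw [h1, Matrix.trace_mul_comm U (Matrix.diagonal u * (Uᴴ * Mc)),
      Matrix.mul_assoc, Matrix.mul_assoc]
    rw [Matrix.trace]
    refine Finset.sum_congr rfl fun i _ => ?_
    rw [Matrix.diag_apply, Matrix.diagonal_mul, ← Matrix.mul_assoc, ← hud i]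
  have habsA : ∀ i j, ‖A i j‖ ≤ 1 := by
    intro i j
    have h1 : A i j = ∑ l, (U i l * u l) * (starRingEnd ℂ) (U j l) := by
      rw [hA, Matrix.mul_apply]
      refine Finset.sum_congr rfl fun l _ => ?_
      rw [Matrix.mul_diagonal, Matrix.conjTranspose_apply]
      rfl
    rw [h1]
    calc ‖∑ l, (U i l * u l) * (starRingEnd ℂ) (U j l)‖
        ≤ ∑ l, ‖(U i l * u l) * (starRingEnd ℂ) (U j l)‖ :=
          norm_sum_le _ _
      _ ≤ ∑ l, ‖U i l‖ * ‖U j l‖ := by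
          refine Finset.sum_le_sum fun l _ => ?_
          rw [norm_mul, norm_mul, Complex.norm_conj]
          have := hu1 l
          have h2 : ‖U i l‖ * ‖u l‖ ≤ ‖U i l‖ * 1 := by
            exact mul_le_mul_of_nonneg_left this (norm_nonneg _)
          nlinarith [norm_nonneg (U j l), norm_nonneg (U i l)]
      _ ≤ 1 := by
          have hcs := Finset.sum_sq_le_sum_mul_sum_of_sq_eq_mul Finset.univ
            (r := fun l => ‖U i l‖ * ‖U j l‖)
            (f := fun l => ‖U i l‖ ^ 2) (g := fun l => ‖U j l‖ ^ 2)
            (fun l _ => sq_nonneg _) (fun l _ => sq_nonneg _) (fun l _ => by ring)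
          rw [hrow i, hrow j, mul_one] at hcs
          have hnn' : (0:ℝ) ≤ ∑ l, ‖U i l‖ * ‖U j l‖ :=
            Finset.sum_nonneg fun l _ => mul_nonneg (norm_nonneg _) (norm_nonneg _)
          nlinarith
  -- final chain
  have hsum_eq : ∑ i, ‖d i‖ = ‖Matrix.trace (A * Mc)‖ := by
    rw [htr, ← Complex.ofReal_sum, Complex.norm_real, Real.norm_eq_abs, abs_of_nonneg]
    exact Finset.sum_nonneg fun i _ => norm_nonneg _
  rw [hsum_eq]
  have htr2 : Matrix.trace (A * Mc) = ∑ i, ∑ l, A i l * Mc l i := by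
    rw [Matrix.trace]
    exact Finset.sum_congr rfl fun i _ => by rw [Matrix.diag_apply, Matrix.mul_apply]
  rw [htr2]
  calc ‖∑ i, ∑ l, A i l * Mc l i‖
      ≤ ∑ i, ‖∑ l, A i l * Mc l i‖ := norm_sum_le _ _
    _ ≤ ∑ i, ∑ l, ‖A i l * Mc l i‖ :=
        Finset.sum_le_sum fun i _ => norm_sum_le _ _
    _ ≤ ∑ i, ∑ l, M l i := by
        refine Finset.sum_le_sum fun i _ => Finset.sum_le_sum fun l _ => ?_
        rw [norm_mul]
        have hMl : ‖Mc l i‖ = M l i := by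
          rw [hMc, Matrix.map_apply, Complex.norm_real, Real.norm_eq_abs, abs_of_nonneg (hnn l i)]
        rw [hMl]
        have := habsA i l
        nlinarith [norm_nonneg (A i l), hnn l i]
    _ = ∑ i, ∑ j, M i j := Finset.sum_comm
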